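/- Let (a_n)_{n≥1} be a lacunary sequence of positive integers, i.e., there exists λ > 1 with a_{n+1} ≥ λ·a_n for all n. Then for any η > 0, the double sum over all pairs n ≠ m of |a_n − a_m|^{−η} converges. -/

import Mathlib

/-- For a lacunary sequence of positive integers `(a_n)` and any `η > 0`, the double sum
`∑_{n ≠ m} |a_n − a_m|^{−η}` converges. -/
theorem summable_lacunary_diff_rpow (a : ℕ → ℕ) (ha : ∀ n, 0 < a n) (lam : ℝ)
    (hlam : 1 < lam) (hlac : ∀ n, lam * a n ≤ a (n + 1)) (η : ℝ) (hη : 0 < η) :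
    Summable (fun p : {p : ℕ × ℕ // p.1 ≠ p.2} =>
      |(a p.1.1 : ℝ) - (a p.1.2 : ℝ)| ^ (-η)) := by
  have hlam0 : (0:ℝ) < lam := lt_trans one_pos hlam
  have hapow : ∀ n, lam ^ n ≤ (a n : ℝ) := by
    intro n
    induction n with
    | zero => simpa using ((Nat.one_le_cast (α := ℝ)).mpr (ha 0))
    | succ n ih =>
      calc lam ^ (n+1) = lam * lam ^ n := by ring
        _ ≤ lam * a n := by nlinarith
        _ ≤ a (n+1) := hlac n
  have hmono : Monotone fun n => (a n : ℝ) := by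
    apply monotone_nat_of_le_succ
    intro n
    have h1 : (a n : ℝ) ≤ lam * a n := by
      have h0 : (1:ℝ) ≤ (a n : ℝ) := Nat.one_le_cast.mpr (ha n)
      nlinarith
    exact h1.trans (hlac n)
  have hgap : ∀ m n, m < n → lam * a m ≤ (a n : ℝ) := by
    intro m n hmn
    have h1 : (a m : ℝ) ≤ a (n-1) := hmono (by omega)
    have h2 : lam * (a (n-1) : ℝ) ≤ a n := by
      have := hlac (n-1); rwa [Nat.sub_add_cancel (by omega)] at this
    nlinarith
  set c : ℝ := 1 - 1/lam with hc
  have hc0 : 0 < c := by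
    have : 1/lam < 1 := by rw [div_lt_one hlam0]; exact hlam
    simp only [hc]; linarith
  set s : ℝ := lam ^ (-η/2) with hs
  have hs0 : 0 < s := Real.rpow_pos_of_pos hlam0 _
  have hs1 : s < 1 := Real.rpow_lt_one_of_one_lt_of_neg hlam (by linarith)
  have spow : ∀ n : ℕ, s ^ n = lam ^ ((-η/2) * n) := by
    intro n
    rw [Real.rpow_mul hlam0.le, Real.rpow_natCast]
  have key : ∀ m n, m < n → |(a n : ℝ) - a m| ^ (-η) ≤ c ^ (-η) * (s ^ n * s ^ m) := by
    intro m n hmn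
    have h1 : lam * a m ≤ (a n : ℝ) := hgap m n hmn
    have hAn : lam ^ (((n:ℝ)+m)/2) ≤ (a n : ℝ) := by
      refine le_trans ?_ (hapow n)
      rw [← Real.rpow_natCast lam n]
      exact Real.rpow_le_rpow_of_exponent_le hlam.le (by
        have : (m:ℝ) ≤ n := Nat.cast_le.mpr hmn.le
        linarith)
    have hL0 : 0 < c * lam ^ (((n:ℝ)+m)/2) :=
      mul_pos hc0 (Real.rpow_pos_of_pos hlam0 _)
    have hLA : c * lam ^ (((n:ℝ)+m)/2) ≤ (a n : ℝ) - a m := by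
      have hm : (a m : ℝ) ≤ (a n : ℝ) / lam := by
        rw [le_div_iff₀ hlam0]; linarith
      have hcc : c * (a n : ℝ) = (a n : ℝ) - (a n : ℝ) / lam := by
        field_simp [hc]; rw [hc]; linear_combination (-(a n : ℝ)) * one_div_mul_cancel hlam0.ne'
      nlinarith [Real.rpow_pos_of_pos hlam0 (((n:ℝ)+m)/2)]
    have habs : |(a n : ℝ) - a m| = (a n : ℝ) - a m :=
      abs_of_pos (lt_of_lt_of_le hL0 hLA)
    rw [habs]
    calc ((a n : ℝ) - a m) ^ (-η)
        ≤ (c * lam ^ (((n:ℝ)+m)/2)) ^ (-η) :=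
          Real.rpow_le_rpow_of_nonpos hL0 hLA (by linarith)
      _ = c ^ (-η) * (s ^ n * s ^ m) := by
          rw [Real.mul_rpow hc0.le (Real.rpow_pos_of_pos hlam0 _).le,
            ← Real.rpow_mul hlam0.le, spow, spow, ← Real.rpow_add hlam0]
          ring_nf
  have hsum : Summable (fun p : ℕ × ℕ => c ^ (-η) * (s ^ p.1 * s ^ p.2)) := by
    apply Summable.mul_left
    exact (summable_geometric_of_lt_one hs0.le hs1).mul_of_nonneg
      (summable_geometric_of_lt_one hs0.le hs1)
      (fun n => pow_nonneg hs0.le n) (fun n => pow_nonneg hs0.le n)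
  refine Summable.of_nonneg_of_le (fun p => Real.rpow_nonneg (abs_nonneg _) _)
    (fun p => ?_) (hsum.subtype {p : ℕ × ℕ | p.1 ≠ p.2})
  obtain ⟨⟨n, m⟩, hp⟩ := p
  rcases lt_or_gt_of_ne hp with h | h
  · have := key n m h
    rw [abs_sub_comm] at this
    simpa [mul_comm] using this
  · exact key m n h
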